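/- For every integer s ≥ 0, the s-th power of F₁ satisfies F₁^s = ρ^{s/2}·[[F₁₁(s), F₁₂(s)], [F₂₁(s), F₂₂(s)]], where F₁₁(s) = sin((s+1)θ)/sin θ + (τ−1)·sin(sθ)/(√ρ·sin θ), F₁₂(s) = −τ√ρ·sin(sθ)/sin θ, F₂₁(s) = τ·sin(sθ)/(√ρ·sin θ), and F₂₂(s) = −sin((s−1)θ)/sin θ − (τ−1)·sin(sθ)/(√ρ·sin θ). -/

import Mathlib

open Finset MeasureTheory

set_option maxHeartbeats 1600000 in
theorem matrix_power_closed_form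
    (τ : ℕ) (hτ : 0 < τ) (ρ : ℝ)
    (hρlo : ((τ : ℝ) - 1) / ((τ : ℝ) + 3) < ρ) (hρhi : ρ < 1)
    (F1 : Matrix (Fin 2) (Fin 2) ℝ)
    (hF1 : F1 = !![ρ * (τ + 1), -(ρ * τ); (τ : ℝ), 1 - τ])
    (θ : ℝ) (hθ : θ ∈ Set.Ioo 0 Real.pi)
    (hcos : Real.cos θ = (ρ * (τ + 1) + 1 - τ) / (2 * Real.sqrt ρ))
    (hsin : Real.sin θ = Real.sqrt (4 * ρ - (ρ * (τ + 1) + 1 - τ) ^ 2) / (2 * Real.sqrt ρ))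
    (F11 F12 F21 F22 : ℕ → ℝ)
    (hF11 : F11 = fun (s : ℕ) => Real.sin (((s : ℝ) + 1) * θ) / Real.sin θ
      + ((τ : ℝ) - 1) * Real.sin ((s : ℝ) * θ) / (Real.sqrt ρ * Real.sin θ))
    (hF12 : F12 = fun (s : ℕ) => -((τ : ℝ) * Real.sqrt ρ * Real.sin ((s : ℝ) * θ) / Real.sin θ))
    (hF21 : F21 = fun (s : ℕ) => (τ : ℝ) * Real.sin ((s : ℝ) * θ) / (Real.sqrt ρ * Real.sin θ))
    (hF22 : F22 = fun (s : ℕ) => -(Real.sin (((s : ℝ) - 1) * θ) / Real.sin θ)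
      - ((τ : ℝ) - 1) * Real.sin ((s : ℝ) * θ) / (Real.sqrt ρ * Real.sin θ))
 :
    ∀ s : ℕ, F1 ^ s = Real.sqrt ρ ^ s • !![F11 s, F12 s; F21 s, F22 s] := by
  have hρpos : 0 < ρ := by
    have h1 : (0:ℝ) ≤ ((τ : ℝ) - 1) / ((τ : ℝ) + 3) := by
      apply div_nonneg
      · have : (1:ℝ) ≤ (τ : ℝ) := by exact_mod_cast hτ
        linarith
      · positivity
    linarith
  set r := Real.sqrt ρ with hr
  have hrpos : 0 < r := Real.sqrt_pos.mpr hρpos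
  have hr2 : r ^ 2 = ρ := Real.sq_sqrt hρpos.le
  set S := Real.sin θ with hSdef
  have hSpos : 0 < S := Real.sin_pos_of_pos_of_lt_pi hθ.1 hθ.2
  set c := Real.cos θ with hcdef
  have hc : c * (2 * r) = ρ * (τ + 1) + 1 - τ := by
    rw [hcos]
    field_simp
  have key : ∀ x : ℝ, Real.sin (x + θ) = 2 * c * Real.sin x - Real.sin (x - θ) := by
    intro x
    rw [Real.sin_add, Real.sin_sub]
    ring
  intro s
  induction s with
  | zero =>
    subst hF11 hF12 hF21 hF22
    simp only [pow_zero, one_smul, Nat.cast_zero]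
    ext i j
    fin_cases i <;> fin_cases j <;>
      simp [Matrix.one_apply, Real.sin_neg, hSpos.ne', zero_sub, neg_neg, zero_add, one_mul,
        div_self]
        <;> simp [← hSdef, hSpos.ne']
  | succ s ih =>
    rw [pow_succ, ih, Matrix.smul_mul, pow_succ, mul_smul]
    clear ih
    congr 1
    subst hF1 hF11 hF12 hF21 hF22
    have hsin2 : Real.sin (((s:ℝ) + 1) * θ + θ) = 2 * c * Real.sin (((s:ℝ)+1) * θ) - Real.sin ((s:ℝ) * θ) := by
      rw [key]
      ring_nf
    have hsin3 : Real.sin ((s:ℝ) * θ + θ) = 2 * c * Real.sin ((s:ℝ) * θ) - Real.sin (((s:ℝ) - 1) * θ) := by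
      rw [key]
      ring_nf
    ext i j
    fin_cases i <;> fin_cases j <;>
      · simp only [Matrix.mul_apply, Fin.sum_univ_two, Matrix.smul_apply, Matrix.cons_val',
          Matrix.cons_val_zero, Matrix.cons_val_one, Matrix.head_cons, Matrix.head_fin_const,
          Matrix.empty_val', Matrix.cons_val_fin_one, smul_eq_mul, Nat.cast_succ, Matrix.of_apply]
        push_cast
        have e1 : ((s:ℝ) + 1 + 1) * θ = ((s:ℝ) + 1) * θ + θ := by ring
        have e2 : ((s:ℝ) + 1) * θ = (s:ℝ) * θ + θ := by ring
        have e3 : ((s:ℝ) + 1 - 1) * θ = (s:ℝ) * θ := by ring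
        simp -failIfUnchanged only [e1, hsin2, e3]
        simp only [show ((s:ℝ) + 1) * θ = (s:ℝ) * θ + θ from by ring, hsin3]
        rw [hcos, ← hr2]
        field_simp
        ring
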